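/- In the construction for the (⇒) direction of Lemma 3.1, if ȳ ∈ W̄′ ∩ R̄^{≤md φ}(ū), then 𝔉, ȳ ⊨ᵛ B. (Sublemma 3.2) -/

import Mathlib

namespace ModalProducts

/-- `N`-modal formulas over propositional variables indexed by `ℕ`
(the variable `pₖ` is `var k`; the extra variable `p` is `var 0`). -/
inductive MF (N : ℕ) : Type
  | var : ℕ → MF N
  | bot : MF N
  | and : MF N → MF N → MF N
  | or  : MF N → MF N → MF N
  | imp : MF N → MF N → MF N
  | box : Fin N → MF N → MF N
deriving DecidableEq

namespace MF

variable {N : ℕ}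

/-- negation: `¬ψ = ψ → ⊥`. -/
def neg (φ : MF N) : MF N := imp φ bot

/-- diamond: `◇ᵢψ = ¬□ᵢ¬ψ`. -/
def dia (i : Fin N) (φ : MF N) : MF N := neg (box i (neg φ))

/-- modal depth. -/
def md : MF N → ℕ
  | var _ => 0
  | bot => 0
  | and φ ψ => max (md φ) (md ψ)
  | or φ ψ => max (md φ) (md ψ)
  | imp φ ψ => max (md φ) (md ψ)
  | box _ φ => md φ + 1

/-- length (number of symbols; the variable `pₖ` counts as `k+1` symbols,
accounting for the subscript). -/
def len : MF N → ℕ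
  | var q => q + 1
  | bot => 1
  | and φ ψ => len φ + len ψ + 1
  | or φ ψ => len φ + len ψ + 1
  | imp φ ψ => len φ + len ψ + 1
  | box _ φ => len φ + 1

/-- the set of propositional variables occurring in a formula. -/
def vars : MF N → Set ℕ
  | var q => {q}
  | bot => ∅
  | and φ ψ => vars φ ∪ vars ψ
  | or φ ψ => vars φ ∪ vars ψ
  | imp φ ψ => vars φ ∪ vars ψ
  | box _ φ => vars φ

/-- the largest index of a variable occurring in a formula (0 if none). -/
def maxVar : MF N → ℕ
  | var q => q
  | bot => 0
  | and φ ψ => max (maxVar φ) (maxVar ψ)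
  | or φ ψ => max (maxVar φ) (maxVar ψ)
  | imp φ ψ => max (maxVar φ) (maxVar ψ)
  | box _ φ => maxVar φ

/-- the list of subformulas of a formula. -/
def subfs : MF N → List (MF N)
  | var q => [var q]
  | bot => [bot]
  | and φ ψ => and φ ψ :: (subfs φ ++ subfs ψ)
  | or φ ψ => or φ ψ :: (subfs φ ++ subfs ψ)
  | imp φ ψ => imp φ ψ :: (subfs φ ++ subfs ψ)
  | box i φ => box i φ :: subfs φ

/-- uniform substitution of formulas for variables. -/
def subst (s : ℕ → MF N) : MF N → MF N
  | var q => s q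
  | bot => bot
  | and φ ψ => and (subst s φ) (subst s ψ)
  | or φ ψ => or (subst s φ) (subst s ψ)
  | imp φ ψ => imp (subst s φ) (subst s ψ)
  | box i φ => box i (subst s φ)

end MF

/-- `θ` is a subformula of `φ`. -/
def Subformula {N : ℕ} (θ φ : MF N) : Prop := θ ∈ φ.subfs

/-- A Kripke `N`-frame: a nonempty set of points with `N` accessibility relations. -/
structure Frame (N : ℕ) where
  W : Type
  nonempty : Nonempty W
  R : Fin N → W → W → Prop

/-- Truth of a formula at a point of a frame under a valuation. -/
def Sat {N : ℕ} (F : Frame N) (v : ℕ → Set F.W) : F.W → MF N → Prop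
  | x, .var q => x ∈ v q
  | _, .bot => False
  | x, .and φ ψ => Sat F v x φ ∧ Sat F v x ψ
  | x, .or φ ψ => Sat F v x φ ∨ Sat F v x ψ
  | x, .imp φ ψ => Sat F v x φ → Sat F v x ψ
  | x, .box i φ => ∀ y, F.R i x y → Sat F v y φ

/-- Validity of a formula in a frame: truth at every point under every valuation. -/
def Valid {N : ℕ} (F : Frame N) (φ : MF N) : Prop := ∀ (v : ℕ → Set F.W) (x : F.W), Sat F v x φ

/-- A set of formulas is valid in a frame if all of its members are. -/
def ValidSet {N : ℕ} (F : Frame N) (L : Set (MF N)) : Prop := ∀ φ ∈ L, Valid F φ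

/-- The logic of a class of frames. -/
def Logic {N : ℕ} (C : Set (Frame N)) : Set (MF N) := {φ | ∀ F ∈ C, Valid F φ}

/-- A logic is Kripke complete if it is the logic of some nonempty class of frames. -/
def KripkeComplete {N : ℕ} (L : Set (MF N)) : Prop :=
  ∃ C : Set (Frame N), C.Nonempty ∧ L = Logic C

/-- The product of `N` 1-frames. -/
def prodFrame {N : ℕ} (Fs : Fin N → Frame 1) : Frame N where
  W := ∀ i, (Fs i).W
  nonempty := ⟨fun i => (Fs i).nonempty.some⟩
  R := fun i x y => (Fs i).R 0 (x i) (y i) ∧ ∀ k, k ≠ i → x k = y k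

/-- The product of `N` Kripke complete monomodal logics: the logic of the class of
products of frames of the factors. -/
def productLogic {N : ℕ} (Ls : Fin N → Set (MF 1)) : Set (MF N) :=
  Logic {F | ∃ Fs : Fin N → Frame 1, (∀ i, ValidSet (Fs i) (Ls i)) ∧ F = prodFrame Fs}

/-- A 1-frame is reflexive. -/
def ReflexiveFrame (F : Frame 1) : Prop := ∀ x, F.R 0 x x

/-- The logic `T` of all reflexive 1-frames. -/
def logicT : Set (MF 1) := Logic {F | ReflexiveFrame F}

/-- The logic `K` of all 1-frames. -/
def logicK : Set (MF 1) := Logic Set.univ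

/-- The logic `S5` of all 1-frames whose relation is an equivalence. -/
def logicS5 : Set (MF 1) := Logic {F | Equivalence (F.R 0)}

section Translation

variable {n : ℕ}

/-- the variable `p`. -/
def pv : MF (n+1) := .var 0

/-- `◆₁ψ = ◇₁(¬p ∧ ◇₁(p ∧ ψ))`. -/
def blackDia (ψ : MF (n+1)) : MF (n+1) :=
  MF.dia 0 (.and (MF.neg pv) (MF.dia 0 (.and pv ψ)))

/-- `α_k = ◆₁ᵏ □₁ p`. -/
def alphaF (k : ℕ) : MF (n+1) := blackDia^[k] (.box 0 pv)

/-- `β_k = ¬p ∧ ◇₁(p ∧ α_k)`. -/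
def betaF (k : ℕ) : MF (n+1) := .and (MF.neg pv) (MF.dia 0 (.and pv (alphaF k)))

/-- `B = β_{m+1}`. -/
def Bf (m : ℕ) : MF (n+1) := betaF (m+1)

/-- The translation `σ`: `σ(p_k) = β_k`, `σ(⊥) = ⊥`, `σ` commutes with `∧, ∨, →`,
and `σ(□ᵢψ) = □ᵢ(B → σ(ψ))`. -/
def sigmaT (m : ℕ) : MF (n+1) → MF (n+1)
  | .var k => betaF k
  | .bot => .bot
  | .and φ ψ => .and (sigmaT m φ) (sigmaT m ψ)
  | .or φ ψ => .or (sigmaT m φ) (sigmaT m ψ)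
  | .imp φ ψ => .imp (sigmaT m φ) (sigmaT m ψ)
  | .box i φ => .box i (.imp (Bf m) (sigmaT m φ))

/-- conjunction of a head formula with a list of formulas. -/
def bigAnd (ψ : MF (n+1)) (l : List (MF (n+1))) : MF (n+1) := l.foldl .and ψ

/-- `□^{≤k}`: `□^{≤0}ψ = ψ`, `□^{≤k+1}ψ = □^{≤k}ψ ∧ □₁□^{≤k}ψ ∧ … ∧ □ₙ□^{≤k}ψ`. -/
def boxLe : ℕ → MF (n+1) → MF (n+1)
  | 0, ψ => ψ
  | k+1, ψ => bigAnd (boxLe k ψ) (List.ofFn fun i : Fin (n+1) => .box i (boxLe k ψ))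

/-- `□₋₁^{≤k}`: like `□^{≤k}` but using only `□₂, …, □ₙ`. -/
def boxLeTail : ℕ → MF (n+1) → MF (n+1)
  | 0, ψ => ψ
  | k+1, ψ => bigAnd (boxLeTail k ψ) (List.ofFn fun i : Fin n => .box i.succ (boxLeTail k ψ))

/-- `◇₋₁^{≤k}ψ = ¬□₋₁^{≤k}¬ψ`. -/
def diaLeTail (k : ℕ) (ψ : MF (n+1)) : MF (n+1) := MF.neg (boxLeTail k (MF.neg ψ))

/-- `A = B ∧ □^{≤md φ}(B → □₋₁^{≤md φ}B) ∧ □^{≤md φ}(◇₋₁^{≤md φ}B → B)`. -/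
def Af (m : ℕ) (φ : MF (n+1)) : MF (n+1) :=
  .and (Bf m)
    (.and (boxLe φ.md (.imp (Bf m) (boxLeTail φ.md (Bf m))))
          (boxLe φ.md (.imp (diaLeTail φ.md (Bf m)) (Bf m))))

end Translation

end ModalProducts
namespace ModalProducts

section Restriction

variable {n : ℕ}

/-- `R̄^{≤k}`: `R̄^{≤0}` is the identity, and
`R̄^{≤k+1} = R̄^{≤k} ∪ R̄₁ ∘ R̄^{≤k} ∪ … ∪ R̄ₙ ∘ R̄^{≤k}`
(reachability in at most `k` steps along the relations of the frame). -/
def RleAll {N : ℕ} (F : Frame N) : ℕ → F.W → F.W → Prop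
  | 0 => fun x y => x = y
  | k+1 => fun x y => RleAll F k x y ∨ ∃ (i : Fin N) (z : F.W), F.R i x z ∧ RleAll F k z y

/-- `R̄₋₁^{≤k}`: reachability in at most `k` steps along `R̄₂, …, R̄ₙ` only. -/
def RleTail (F : Frame (n+1)) : ℕ → F.W → F.W → Prop
  | 0 => fun x y => x = y
  | k+1 => fun x y =>
      RleTail F k x y ∨ ∃ (i : Fin n) (z : F.W), F.R i.succ x z ∧ RleTail F k z y

/-- The set `W′₁ = {x₁ ∈ W₁ : 𝔉, x̄ ⊨ᵛ B and x̄ ∈ R̄^{≤d}(ū)` for some `x̄ ∈ W̄` with first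
coordinate `x₁}`. -/
def restrSet (Fs : Fin (n+1) → Frame 1) (m d : ℕ) (v : ℕ → Set (prodFrame Fs).W)
    (u : (prodFrame Fs).W) : Set (Fs 0).W :=
  {x1 | ∃ x : (prodFrame Fs).W, x 0 = x1 ∧ Sat (prodFrame Fs) v x (Bf m) ∧
        RleAll (prodFrame Fs) d u x}

/-- The subframe of a 1-frame induced by a nonempty set of points
(the relation is restricted to the set). -/
def subFrame1 (F1 : Frame 1) (S : Set F1.W) (hS : S.Nonempty) : Frame 1 where
  W := S
  nonempty := ⟨⟨hS.choose, hS.choose_spec⟩⟩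
  R := fun i x y => F1.R i x.val y.val

/-- The factors of the restricted product `𝔉′ = 𝔉′₁ × 𝔉₂ × … × 𝔉ₙ`,
where `𝔉′₁ = ⟨W′₁, R₁ ↾ W′₁⟩`. -/
def restrFactors (Fs : Fin (n+1) → Frame 1) (m d : ℕ) (v : ℕ → Set (prodFrame Fs).W)
    (u : (prodFrame Fs).W) (hS : (restrSet Fs m d v u).Nonempty) : Fin (n+1) → Frame 1 :=
  Fin.cases (subFrame1 (Fs 0) (restrSet Fs m d v u) hS) (fun i => Fs i.succ)

/-- The restricted product frame `𝔉′ = 𝔉′₁ × 𝔉₂ × … × 𝔉ₙ`. -/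
def restrFrame (Fs : Fin (n+1) → Frame 1) (m d : ℕ) (v : ℕ → Set (prodFrame Fs).W)
    (u : (prodFrame Fs).W) (hS : (restrSet Fs m d v u).Nonempty) : Frame (n+1) :=
  prodFrame (restrFactors Fs m d v u hS)

/-- The natural inclusion `W̄′ ⊆ W̄` of the points of `𝔉′` among those of `𝔉`. -/
def restrEmb (Fs : Fin (n+1) → Frame 1) (m d : ℕ) (v : ℕ → Set (prodFrame Fs).W)
    (u : (prodFrame Fs).W) (hS : (restrSet Fs m d v u).Nonempty)
    (y : (restrFrame Fs m d v u hS).W) : (prodFrame Fs).W :=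
  Fin.cases (motive := fun i => (Fs i).W) (y 0).val (fun i => y i.succ)

/-- A point `x̄ ∈ W̄` whose first coordinate lies in `W′₁`, viewed as a point of `W̄′`. -/
def mkRestrPt (Fs : Fin (n+1) → Frame 1) (m d : ℕ) (v : ℕ → Set (prodFrame Fs).W)
    (u : (prodFrame Fs).W) (hS : (restrSet Fs m d v u).Nonempty)
    (x : (prodFrame Fs).W) (hx : x 0 ∈ restrSet Fs m d v u) :
    (restrFrame Fs m d v u hS).W :=
  Fin.cases (motive := fun i => ((restrFactors Fs m d v u hS) i).W)
    ⟨x 0, hx⟩ (fun i => x i.succ)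

end Restriction

end ModalProducts

open ModalProducts

namespace ModalProducts

lemma pupd_self {n : ℕ} {Fs : Fin (n+1) → Frame 1} (u : (prodFrame Fs).W) (a : Fin (n+1))
    (z : (Fs a).W) : Function.update u a z a = z := by exact Function.update_self _ _ _

lemma pupd_ne {n : ℕ} {Fs : Fin (n+1) → Frame 1} {u : (prodFrame Fs).W} {a k : Fin (n+1)}
    (h : k ≠ a) (z : (Fs a).W) : Function.update u a z k = u k := by
  exact Function.update_of_ne h _ _

lemma pupd_eq_self {n : ℕ} {Fs : Fin (n+1) → Frame 1} (u : (prodFrame Fs).W) (a : Fin (n+1)) :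
    Function.update u a (u a) = u := by exact Function.update_eq_self _ _

lemma pupd_idem {n : ℕ} {Fs : Fin (n+1) → Frame 1} (u : (prodFrame Fs).W) (a : Fin (n+1))
    (z w : (Fs a).W) :
    Function.update (Function.update u a z) a w = Function.update u a w := by
  exact Function.update_idem _ _ _

lemma sat_and_iff {N : ℕ} {F : Frame N} {v : ℕ → Set F.W} {x : F.W} {φ ψ : MF N} :
    Sat F v x (.and φ ψ) ↔ Sat F v x φ ∧ Sat F v x ψ := Iff.rfl

lemma sat_imp_iff {N : ℕ} {F : Frame N} {v : ℕ → Set F.W} {x : F.W} {φ ψ : MF N} :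
    Sat F v x (.imp φ ψ) ↔ (Sat F v x φ → Sat F v x ψ) := Iff.rfl

lemma sat_box_iff {N : ℕ} {F : Frame N} {v : ℕ → Set F.W} {x : F.W} {i : Fin N} {φ : MF N} :
    Sat F v x (.box i φ) ↔ ∀ y, F.R i x y → Sat F v y φ := Iff.rfl

lemma rleAll_succ {N : ℕ} (F : Frame N) {k : ℕ} {x y : F.W}
    (h : RleAll F k x y) : RleAll F (k+1) x y := Or.inl h

lemma rleAll_mono {N : ℕ} (F : Frame N) {k k' : ℕ} (hk : k ≤ k') {x y : F.W}
    (h : RleAll F k x y) : RleAll F k' x y := by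
  induction hk with
  | refl => exact h
  | step _ ih => exact Or.inl ih

lemma rleTail_succ {n : ℕ} (F : Frame (n+1)) {k : ℕ} {x y : F.W}
    (h : RleTail F k x y) : RleTail F (k+1) x y := Or.inl h

lemma rleTail_mono {n : ℕ} (F : Frame (n+1)) {k k' : ℕ} (hk : k ≤ k') {x y : F.W}
    (h : RleTail F k x y) : RleTail F k' x y := by
  induction hk with
  | refl => exact h
  | step _ ih => exact Or.inl ih

lemma sat_bigAnd {n : ℕ} (F : Frame (n+1)) (v : ℕ → Set F.W) (x : F.W) :
    ∀ (l : List (MF (n+1))) (ψ : MF (n+1)),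
      Sat F v x (bigAnd ψ l) ↔ Sat F v x ψ ∧ ∀ χ ∈ l, Sat F v x χ := by
  intro l
  induction l with
  | nil => intro ψ; simp [bigAnd]
  | cons a l ih =>
    intro ψ
    have h : bigAnd ψ (a :: l) = bigAnd (ψ.and a) l := rfl
    rw [h, ih, sat_and_iff]
    constructor
    · rintro ⟨⟨h1, h2⟩, h3⟩
      refine ⟨h1, fun χ hχ => ?_⟩
      rcases List.mem_cons.mp hχ with rfl | hχ'
      exacts [h2, h3 χ hχ']
    · rintro ⟨h1, h2⟩
      exact ⟨⟨h1, h2 a List.mem_cons_self⟩, fun χ hχ => h2 χ (List.mem_cons_of_mem a hχ)⟩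

lemma sat_boxLe {n : ℕ} (F : Frame (n+1)) (v : ℕ → Set F.W) (ψ : MF (n+1)) :
    ∀ (k : ℕ) (x : F.W), Sat F v x (boxLe k ψ) →
      ∀ y, RleAll F k x y → Sat F v y ψ := by
  intro k
  induction k with
  | zero => intro x h y hy; cases hy; exact h
  | succ k ih =>
    intro x h y hy
    have h' : Sat F v x (bigAnd (boxLe k ψ)
        (List.ofFn fun i : Fin (n+1) => .box i (boxLe k ψ))) := h
    rw [sat_bigAnd] at h'
    rcases hy with hy | ⟨i, z, hxz, hzy⟩
    · exact ih x h'.1 y hy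
    · have hb : Sat F v x (.box i (boxLe k ψ)) :=
        h'.2 _ (List.mem_ofFn.mpr ⟨i, rfl⟩)
      exact ih z (hb z hxz) y hzy

lemma sat_boxLeTail {n : ℕ} (F : Frame (n+1)) (v : ℕ → Set F.W) (ψ : MF (n+1)) :
    ∀ (k : ℕ) (x : F.W), Sat F v x (boxLeTail k ψ) →
      ∀ y, RleTail F k x y → Sat F v y ψ := by
  intro k
  induction k with
  | zero => intro x h y hy; cases hy; exact h
  | succ k ih =>
    intro x h y hy
    have h' : Sat F v x (bigAnd (boxLeTail k ψ)
        (List.ofFn fun i : Fin n => .box i.succ (boxLeTail k ψ))) := h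
    rw [sat_bigAnd] at h'
    rcases hy with hy | ⟨i, z, hxz, hzy⟩
    · exact ih x h'.1 y hy
    · have hb : Sat F v x (.box i.succ (boxLeTail k ψ)) :=
        h'.2 _ (List.mem_ofFn.mpr ⟨i, rfl⟩)
      exact ih z (hb z hxz) y hzy

/-- Lift a path in the first factor to a path in the product fixing the tail. -/
lemma lift_first {n : ℕ} (Fs : Fin (n+1) → Frame 1) :
    ∀ (a : ℕ) (u : (prodFrame Fs).W) (y0 : (Fs 0).W),
      RleAll (Fs 0) a (u 0) y0 →
      RleAll (prodFrame Fs) a u (Function.update u 0 y0) := by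
  intro a
  induction a with
  | zero =>
    intro u y0 h
    cases h
    rw [pupd_eq_self]
    exact rfl
  | succ a ih =>
    intro u y0 h
    rcases h with h | ⟨i, z0, hR, hz⟩
    · exact rleAll_succ _ (ih u y0 h)
    · have hi : i = 0 := Subsingleton.elim _ _
      subst hi
      refine Or.inr ⟨0, Function.update u 0 z0, ?_, ?_⟩
      · constructor
        · simpa [pupd_self] using hR
        · intro k hk; simp [pupd_ne hk]
      · have := ih (Function.update u 0 z0) y0 (by simpa [pupd_self] using hz)
        simpa [pupd_idem] using this

/-- Decomposition of a path in the product: first-coordinate part and tail part. -/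
lemma decomp {n : ℕ} (Fs : Fin (n+1) → Frame 1) :
    ∀ (k : ℕ) (u x : (prodFrame Fs).W), RleAll (prodFrame Fs) k u x →
      ∃ a b, a + b ≤ k ∧ RleAll (Fs 0) a (u 0) (x 0) ∧
        RleTail (prodFrame Fs) b (Function.update u 0 (x 0)) x := by
  intro k
  induction k with
  | zero =>
    intro u x h
    cases h
    refine ⟨0, 0, Nat.le_refl 0, rfl, ?_⟩
    rw [pupd_eq_self]
    exact rfl
  | succ k ih =>
    intro u x h
    rcases h with h | ⟨i, z, hR, hz⟩
    · obtain ⟨a, b, hab, h0, ht⟩ := ih u x h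
      exact ⟨a, b, Nat.le_succ_of_le hab, h0, ht⟩
    · obtain ⟨a, b, hab, h0, ht⟩ := ih z x hz
      rcases Fin.eq_zero_or_eq_succ i with hi | ⟨j, hi⟩
      · subst hi
        refine ⟨a + 1, b, by omega, Or.inr ⟨0, z 0, hR.1, h0⟩, ?_⟩
        have heq : Function.update u 0 (x 0) = Function.update z 0 (x 0) := by
          funext j
          rcases eq_or_ne j 0 with rfl | hj
          · simp [pupd_self]
          · simp [pupd_ne hj, hR.2 j hj]
        rw [heq]; exact ht
      · subst hi
        refine ⟨a, b + 1, by omega, ?_, ?_⟩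
        · have : z 0 = u 0 := (hR.2 0 (Fin.succ_ne_zero j).symm).symm
          rwa [← this]
        · refine Or.inr ⟨j, Function.update z 0 (x 0), ?_, ht⟩
          constructor
          · have h1 : j.succ ≠ (0 : Fin (n+1)) := Fin.succ_ne_zero j
            simpa [pupd_ne h1] using hR.1
          · intro kk hkk
            rcases eq_or_ne kk 0 with rfl | hk0
            · simp [pupd_self]
            · simp [pupd_ne hk0, hR.2 kk hkk]

end ModalProducts

/-- **Sublemma 3.2.** In the construction for direction (⇒) of Lemma 3.1: if
`ȳ ∈ W̄′ ∩ R̄^{≤md φ}(ū)` (i.e. the first coordinate of `ȳ` lies in `W′₁` and `ȳ` is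
reachable from `ū` in at most `md φ` steps), then `𝔉, ȳ ⊨ᵛ B`. -/
theorem sublemma_3_2 (n m : ℕ) (φ : MF (n+1))
    (hvars : ∀ q ∈ φ.vars, 1 ≤ q ∧ q ≤ m)
    (Fs : Fin (n+1) → Frame 1) (hrefl : ReflexiveFrame (Fs 0))
    (v : ℕ → Set (prodFrame Fs).W)
    (u : (prodFrame Fs).W) (hA : Sat (prodFrame Fs) v u (Af m φ))
    (y : (prodFrame Fs).W)
    (hy1 : y 0 ∈ restrSet Fs m φ.md v u)
    (hy2 : RleAll (prodFrame Fs) φ.md u y) :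
    Sat (prodFrame Fs) v y (Bf m) := by
  obtain ⟨x, hx0, hxB, hux⟩ := hy1
  have hA' : Sat (prodFrame Fs) v u (Bf m) ∧
      Sat (prodFrame Fs) v u (boxLe φ.md (.imp (Bf m) (boxLeTail φ.md (Bf m)))) ∧
      Sat (prodFrame Fs) v u (boxLe φ.md (.imp (diaLeTail φ.md (Bf m)) (Bf m))) := hA
  obtain ⟨-, hA1, hA2⟩ := hA'
  obtain ⟨a, b, hab, h0, ht⟩ := decomp Fs φ.md u x hux
  set w := Function.update u 0 (x 0) with hw
  have huw : RleAll (prodFrame Fs) φ.md u w :=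
    rleAll_mono _ (le_trans (Nat.le_add_right a b) hab) (lift_first Fs a u (x 0) h0)
  have hdia : Sat (prodFrame Fs) v w (diaLeTail φ.md (Bf m)) := by
    intro hbox
    have hx' : Sat (prodFrame Fs) v x (MF.neg (Bf m)) :=
      sat_boxLeTail (prodFrame Fs) v _ φ.md w hbox x
        (rleTail_mono _ (le_trans (Nat.le_add_left b a) hab) ht)
    exact hx' hxB
  have hwB : Sat (prodFrame Fs) v w (Bf m) :=
    (sat_boxLe (prodFrame Fs) v _ φ.md u hA2 w huw) hdia
  have hwBox : Sat (prodFrame Fs) v w (boxLeTail φ.md (Bf m)) :=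
    (sat_boxLe (prodFrame Fs) v _ φ.md u hA1 w huw) hwB
  obtain ⟨a', b', hab', h0', ht'⟩ := decomp Fs φ.md u y hy2
  have hwy : Function.update u 0 (y 0) = w := by rw [hw, hx0]
  rw [hwy] at ht'
  exact sat_boxLeTail (prodFrame Fs) v _ φ.md w hwBox y
    (rleTail_mono _ (le_trans (Nat.le_add_left b' a') hab') ht')
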